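/- Let f : U → ℝ be C^{k+1} on an open set U ⊂ ℝⁿ with |∇f|² ≡ 1 on U. Let p ∈ U with ∇f(p) = (0,…,0,1). Then for any multi-index I of length k (1 ≤ k), the derivative ∂/∂y_n (∂^k f/∂y_I)(p) equals −(1/2) ∑_{j=1}^n ∑_{∅ ≠ J ⊊ I} ∂/∂y_j(∂^{|J|}f/∂y_J)(p) · ∂/∂y_j(∂^{k−|J|}f/∂y_{I∖J})(p), where the sum over J is over subsets of the multi-index I counted with multiplicity as in the Leibniz rule. -/

import Mathlib

open Finset

section DAux

variable {E : Type*} [NormedAddCommGroup E] [NormedSpace ℝ E]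

noncomputable def Dd (v : E) (u : E → ℝ) : E → ℝ := fun x => fderiv ℝ u x v

noncomputable def DLL : List E → (E → ℝ) → (E → ℝ)
  | [], u => u
  | v :: l, u => Dd v (DLL l u)

lemma DLL_append (l : List E) (v : E) (u : E → ℝ) : DLL (l ++ [v]) u = DLL l (Dd v u) := by
  induction l with
  | nil => rfl
  | cons a l ih =>
    show Dd a (DLL (l ++ [v]) u) = _
    rw [ih]
    rfl

lemma ofFn_cons {β : Type*} {m : ℕ} (a : β) (g : Fin m → β) :
    List.ofFn (Fin.cons a g) = a :: List.ofFn g := by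
  rw [List.ofFn_succ]
  simp

variable {U : Set E} (hU : IsOpen U)
include hU

lemma Dd_congr {u w : E → ℝ} (h : Set.EqOn u w U) (v : E) :
    Set.EqOn (Dd v u) (Dd v w) U := by
  intro x hx
  simp only [Dd]
  rw [Filter.EventuallyEq.fderiv_eq (Filter.eventuallyEq_of_mem (hU.mem_nhds hx) h)]

lemma DLL_congr (l : List E) {u w : E → ℝ} (h : Set.EqOn u w U) :
    Set.EqOn (DLL l u) (DLL l w) U := by
  induction l with
  | nil => exact h
  | cons v l ih => exact Dd_congr hU ih v

lemma Dd_contDiffOn {u : E → ℝ} {m : ℕ} (hu : ContDiffOn ℝ (m + 1 : ℕ) u U) (v : E) :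
    ContDiffOn ℝ (m : ℕ) (Dd v u) U := by
  have h1 : ContDiffOn ℝ (m : ℕ) (fderiv ℝ u) U :=
    hu.fderiv_of_isOpen hU (by exact_mod_cast le_refl (m + 1))
  exact (ContinuousLinearMap.apply ℝ ℝ v).contDiff.comp_contDiffOn h1

lemma diffAt_of_contDiffOn {u : E → ℝ} {m : ℕ} (hu : ContDiffOn ℝ (m + 1 : ℕ) u U)
    {x : E} (hx : x ∈ U) : DifferentiableAt ℝ u x := by
  have h1 : (1 : WithTop ℕ∞) ≤ ((m + 1 : ℕ) : WithTop ℕ∞) := by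
    exact_mod_cast Nat.le_add_left 1 m
  exact ((hu.differentiableOn (by exact_mod_cast Nat.succ_ne_zero m)).differentiableAt (hU.mem_nhds hx))

lemma DLL_contDiffOn (l : List E) {u : E → ℝ} {m : ℕ}
    (hu : ContDiffOn ℝ (l.length + m : ℕ) u U) :
    ContDiffOn ℝ (m : ℕ) (DLL l u) U := by
  induction l generalizing m with
  | nil => simpa [DLL] using hu
  | cons v l ih =>
      refine Dd_contDiffOn hU (ih (m := m + 1) ?_) v
      rwa [show l.length + (m + 1) = (v :: l).length + m by simp; omega]

lemma DLL_diffAt (l : List E) {u : E → ℝ} (hu : ContDiffOn ℝ (l.length + 1 : ℕ) u U)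
    {x : E} (hx : x ∈ U) : DifferentiableAt ℝ (DLL l u) x := by
  have h1 : ContDiffOn ℝ (1 : ℕ) (DLL l u) U := DLL_contDiffOn hU l hu
  exact (h1.differentiableOn (by norm_num)).differentiableAt (hU.mem_nhds hx)

lemma Dd_mul {u w : E → ℝ} {x : E} (hu : DifferentiableAt ℝ u x)
    (hw : DifferentiableAt ℝ w x) (v : E) :
    Dd v (fun y => u y * w y) x = Dd v u x * w x + u x * Dd v w x := by
  simp only [Dd, fderiv_fun_mul hu hw, ContinuousLinearMap.add_apply,
    ContinuousLinearMap.smul_apply, smul_eq_mul]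
  ring

lemma Dd_fderiv_apply {u : E → ℝ} {x : E} (h : DifferentiableAt ℝ (fderiv ℝ u) x) (v w : E) :
    Dd v (Dd w u) x = fderiv ℝ (fderiv ℝ u) x v w := by
  have h1 : Dd w u = (ContinuousLinearMap.apply ℝ ℝ w) ∘ (fderiv ℝ u) := rfl
  rw [Dd, h1, fderiv_comp x (ContinuousLinearMap.apply ℝ ℝ w).differentiableAt h]
  simp

lemma Dd_swap {u : E → ℝ} (hu : ContDiffOn ℝ 2 u U) {x : E} (hx : x ∈ U) (v w : E) :
    Dd v (Dd w u) x = Dd w (Dd v u) x := by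
  have hat : ContDiffAt ℝ 2 u x := hu.contDiffAt (hU.mem_nhds hx)
  have hdf : DifferentiableAt ℝ (fderiv ℝ u) x :=
    (hat.fderiv_right (m := 1) (by norm_num)).differentiableAt one_ne_zero
  rw [Dd_fderiv_apply hU hdf, Dd_fderiv_apply hU hdf, (hat.isSymmSndFDerivAt (by norm_num)).eq]

lemma DLL_add (l : List E) {u w : E → ℝ}
    (hu : ContDiffOn ℝ (l.length : ℕ) u U) (hw : ContDiffOn ℝ (l.length : ℕ) w U) :
    Set.EqOn (DLL l (fun x => u x + w x)) (fun x => DLL l u x + DLL l w x) U := by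
  induction l with
  | nil => intro x hx; rfl
  | cons v l ih =>
    intro x hx
    have hle : ((l.length : ℕ) : WithTop ℕ∞) ≤ ((v :: l).length : ℕ) := by
      exact_mod_cast Nat.le_succ _
    have h1 := ih (hu.of_le hle) (hw.of_le hle)
    show Dd v (DLL l fun x => u x + w x) x = _
    rw [Dd_congr hU h1 v hx]
    have h2 : DifferentiableAt ℝ (DLL l u) x := DLL_diffAt hU l (by simpa using hu) hx
    have h3 : DifferentiableAt ℝ (DLL l w) x := DLL_diffAt hU l (by simpa using hw) hx
    simp only [Dd, fderiv_fun_add h2 h3, ContinuousLinearMap.add_apply]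
    rfl

lemma DLL_sum {ι : Type*} (t : Finset ι) (l : List E) (u : ι → E → ℝ)
    (hu : ∀ i ∈ t, ContDiffOn ℝ (l.length : ℕ) (u i) U) :
    Set.EqOn (DLL l (fun x => ∑ i ∈ t, u i x)) (fun x => ∑ i ∈ t, DLL l (u i) x) U := by
  induction l with
  | nil => intro x hx; rfl
  | cons v l ih =>
    intro x hx
    have hle : ((l.length : ℕ) : WithTop ℕ∞) ≤ ((v :: l).length : ℕ) := by
      exact_mod_cast Nat.le_succ _
    have h1 := ih (fun i hi => (hu i hi).of_le hle)
    show Dd v (DLL l fun x => ∑ i ∈ t, u i x) x = _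
    rw [Dd_congr hU h1 v hx]
    have h2 : ∀ i ∈ t, DifferentiableAt ℝ (DLL l (u i)) x := fun i hi =>
      DLL_diffAt hU l (by simpa using hu i hi) hx
    simp only [Dd, fderiv_fun_sum h2, ContinuousLinearMap.sum_apply]
    rfl

lemma DLL_Dd_comm (l : List E) {u : E → ℝ} (hu : ContDiffOn ℝ (l.length + 1 : ℕ) u U) (v : E) :
    Set.EqOn (DLL l (Dd v u)) (Dd v (DLL l u)) U := by
  induction l with
  | nil => intro x hx; rfl
  | cons a l ih =>
    intro x hx
    have hle : ((l.length + 1 : ℕ) : WithTop ℕ∞) ≤ ((a :: l).length + 1 : ℕ) := by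
      exact_mod_cast Nat.le_succ _
    have h1 := ih (hu.of_le hle)
    show Dd a (DLL l (Dd v u)) x = Dd v (Dd a (DLL l u)) x
    rw [Dd_congr hU h1 a hx]
    have h2 : ContDiffOn ℝ 2 (DLL l u) U := by
      have := DLL_contDiffOn hU l (u := u) (m := 2) (by
        rwa [show l.length + 2 = (a :: l).length + 1 by simp])
      exact_mod_cast this
    exact Dd_swap hU h2 hx a v

omit hU in
lemma DLL_one (l : List E) (hl : l ≠ []) :
    DLL l (fun _ => (1 : ℝ)) = fun _ => 0 := by
  induction l with
  | nil => exact absurd rfl hl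
  | cons v l ih =>
    cases l with
    | nil =>
      show Dd v (fun _ => (1:ℝ)) = _
      funext x
      simp [Dd, fderiv_const]
    | cons a l =>
      show Dd v (DLL (a :: l) fun _ => (1:ℝ)) = _
      rw [ih (by simp)]
      funext x
      simp [Dd, fderiv_const]

lemma iteratedFDeriv_eq_DLL : ∀ (m : ℕ) (u : E → ℝ), ContDiffOn ℝ (m : ℕ) u U →
    ∀ {x : E}, x ∈ U → ∀ (v : Fin m → E),
    iteratedFDeriv ℝ m u x (fun i => v i) = DLL (List.ofFn v) u x := by
  intro m
  induction m with
  | zero => intro u hu x hx v; simp [DLL]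
  | succ m ih =>
    intro u hu x hx v
    have hUD : UniqueDiffOn ℝ U := hU.uniqueDiffOn
    have h1 : iteratedFDeriv ℝ (m + 1) u x (fun i => v i)
        = iteratedFDerivWithin ℝ (m + 1) u U x (fun i => v i) := by
      rw [iteratedFDerivWithin_of_isOpen _ hU hx]
    rw [h1, iteratedFDerivWithin_succ_apply_right hUD hx]
    have hfd : ContDiffOn ℝ (m : ℕ) (fderivWithin ℝ u U) U :=
      hu.fderivWithin hUD (by exact_mod_cast le_refl (m + 1))
    have h3 := (ContinuousLinearMap.apply ℝ ℝ (v (Fin.last m))).iteratedFDerivWithin_comp_left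
      (f := fderivWithin ℝ u U) (hfd x hx) hUD hx (le_refl (m : WithTop ℕ∞))
    have h4 : iteratedFDerivWithin ℝ m (fun y => fderivWithin ℝ u U y) U x
          (Fin.init fun i => v i) ((fun i => v i) (Fin.last m))
        = iteratedFDerivWithin ℝ m
            ((ContinuousLinearMap.apply ℝ ℝ (v (Fin.last m))) ∘ (fderivWithin ℝ u U)) U x
            (Fin.init v) := by
      rw [h3]
      rfl
    rw [h4]
    have h5 : Set.EqOn ((ContinuousLinearMap.apply ℝ ℝ (v (Fin.last m))) ∘ (fderivWithin ℝ u U))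
        (Dd (v (Fin.last m)) u) U := by
      intro y hy
      show fderivWithin ℝ u U y (v (Fin.last m)) = fderiv ℝ u y (v (Fin.last m))
      rw [fderivWithin_of_isOpen hU hy]
    rw [iteratedFDerivWithin_congr h5 hx m]
    rw [iteratedFDerivWithin_of_isOpen _ hU hx]
    have hu' : ContDiffOn ℝ (m : ℕ) (Dd (v (Fin.last m)) u) U :=
      Dd_contDiffOn hU (by exact_mod_cast hu) (v (Fin.last m))
    have h6 := ih (Dd (v (Fin.last m)) u) hu' hx (Fin.init v)
    rw [show iteratedFDeriv ℝ m (Dd (v (Fin.last m)) u) x (Fin.init v)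
        = iteratedFDeriv ℝ m (Dd (v (Fin.last m)) u) x (fun i => Fin.init v i) from rfl, h6]
    rw [← DLL_append]
    congr 1
    rw [List.ofFn_succ', List.concat_eq_append]
    rfl

omit hU in
lemma sort_insert_max {α : Type*} [LinearOrder α] [DecidableEq α] {s : Finset α} {a : α} (ha : a ∉ s)
    (h : ∀ b ∈ s, b ≤ a) :
    (insert a s).sort (· ≤ ·) = s.sort (· ≤ ·) ++ [a] := by
  refine (fun hp h1 h2 => List.Perm.eq_of_pairwise' (r := (· ≤ ·)) h1 h2 hp) ?_ ?_ ?_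
  · have p1 := (insert a s).sort_perm_toList (· ≤ ·)
    have p2 := Finset.toList_insert ha
    have p3 := (s.sort_perm_toList (· ≤ ·)).symm
    exact p1.trans (p2.trans ((p3.cons a).trans (List.perm_append_singleton a _).symm))
  · exact Finset.pairwise_sort _ _
  · rw [List.pairwise_append]
    refine ⟨Finset.pairwise_sort _ _, List.pairwise_singleton _ _, ?_⟩
    intro b hb c hc
    rw [List.mem_singleton] at hc
    subst hc
    exact h b ((Finset.mem_sort _).1 hb)

omit hU in
lemma sort_univ_eq {k : ℕ} : (Finset.univ : Finset (Fin k)).sort (· ≤ ·) = List.finRange k := by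
  refine (fun hp h1 h2 => List.Perm.eq_of_pairwise' (r := (· ≤ ·)) h1 h2 hp) ?_ ?_ ?_
  · refine ((Finset.univ.sort_perm_toList (· ≤ ·)).trans ?_)
    apply List.perm_of_nodup_nodup_toFinset_eq (Finset.nodup_toList _) (List.nodup_finRange k)
    rw [Finset.toList_toFinset]
    exact (Finset.eq_univ_of_forall (by simp)).symm
  · exact Finset.pairwise_sort _ _
  · exact (List.pairwise_lt_finRange k).imp le_of_lt

omit hU in
lemma ofFn_orderIso {α β : Type*} [LinearOrder α] (s : Finset α) (g : α → β) :
    (List.ofFn fun i : Fin s.card => g ((s.orderIsoOfFin rfl i : α))) =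
      (s.sort (· ≤ ·)).map g := by
  apply List.ext_get
  · simp
  · intro i h1 h2
    simp only [List.get_ofFn, List.get_eq_getElem, List.getElem_map, List.getElem_ofFn]
    congr 1

lemma DLL_leibniz {α : Type*} [LinearOrder α] [DecidableEq α] (c : α → E) :
    ∀ (T : Finset α) (u w : E → ℝ), ContDiffOn ℝ (T.card : ℕ) u U →
      ContDiffOn ℝ (T.card : ℕ) w U →
    Set.EqOn (DLL ((T.sort (· ≤ ·)).map c) (fun x => u x * w x))
      (fun x => ∑ s ∈ T.powerset,
        DLL ((s.sort (· ≤ ·)).map c) u x * DLL (((T \ s).sort (· ≤ ·)).map c) w x) U := by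
  intro T
  induction T using Finset.strongInduction with
  | _ T ih =>
    intro u w hu hw
    rcases T.eq_empty_or_nonempty with rfl | hT
    · intro x hx
      simp [DLL]
    · set a := T.max' hT with ha
      set T' := T.erase a with hT'
      have haT : a ∈ T := T.max'_mem hT
      have hanT' : a ∉ T' := notMem_erase a T
      have hins : insert a T' = T := insert_erase haT
      have hcard : T.card = T'.card + 1 := by
        rw [← hins, card_insert_of_notMem hanT']
      have hsub : T' ⊂ T := erase_ssubset haT
      have hsort : T.sort (· ≤ ·) = T'.sort (· ≤ ·) ++ [a] := by
        conv_lhs => rw [← hins]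
        exact sort_insert_max hanT' (fun b hb => T.le_max' b (mem_of_mem_erase hb))
      have hu' : ContDiffOn ℝ (T'.card + 1 : ℕ) u U := by rwa [hcard] at hu
      have hw' : ContDiffOn ℝ (T'.card + 1 : ℕ) w U := by rwa [hcard] at hw
      have hDu : ContDiffOn ℝ (T'.card : ℕ) (Dd (c a) u) U := Dd_contDiffOn hU hu' (c a)
      have hDw : ContDiffOn ℝ (T'.card : ℕ) (Dd (c a) w) U := Dd_contDiffOn hU hw' (c a)
      have hle : ((T'.card : ℕ) : WithTop ℕ∞) ≤ ((T'.card + 1 : ℕ) : WithTop ℕ∞) := by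
        exact_mod_cast Nat.le_succ _
      have hu1 : ContDiffOn ℝ (T'.card : ℕ) u U := hu'.of_le hle
      have hw1 : ContDiffOn ℝ (T'.card : ℕ) w U := hw'.of_le hle
      intro x hx
      have step1 : DLL ((T.sort (· ≤ ·)).map c) (fun x => u x * w x) x
          = DLL ((T'.sort (· ≤ ·)).map c) (Dd (c a) (fun x => u x * w x)) x := by
        rw [hsort, List.map_append, List.map_singleton, DLL_append]
      have step2 : Set.EqOn (Dd (c a) (fun x => u x * w x))
          (fun y => Dd (c a) u y * w y + u y * Dd (c a) w y) U := by
        intro y hy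
        exact Dd_mul hU (diffAt_of_contDiffOn hU hu' hy) (diffAt_of_contDiffOn hU hw' hy) (c a)
      have hlen : ((T'.sort (· ≤ ·)).map c).length = T'.card := by simp
      have step3 : DLL ((T'.sort (· ≤ ·)).map c) (Dd (c a) (fun x => u x * w x)) x
          = DLL ((T'.sort (· ≤ ·)).map c) (fun y => Dd (c a) u y * w y) x
            + DLL ((T'.sort (· ≤ ·)).map c) (fun y => u y * Dd (c a) w y) x := by
        rw [DLL_congr hU _ step2 hx]
        exact DLL_add hU _ (by rw [hlen]; exact hDu.mul hw1) (by rw [hlen]; exact hu1.mul hDw) hx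
      have ih1 := ih T' hsub (Dd (c a) u) w hDu hw1 hx
      have ih2 := ih T' hsub u (Dd (c a) w) hu1 hDw hx
      have key1 : ∀ s ∈ T'.powerset,
          DLL ((s.sort (· ≤ ·)).map c) (Dd (c a) u) x
            * DLL (((T' \ s).sort (· ≤ ·)).map c) w x
          = DLL (((insert a s).sort (· ≤ ·)).map c) u x
            * DLL (((T \ insert a s).sort (· ≤ ·)).map c) w x := by
        intro s hs
        rw [mem_powerset] at hs
        have has : a ∉ s := fun h => hanT' (hs h)
        have h1 : (insert a s).sort (· ≤ ·) = s.sort (· ≤ ·) ++ [a] :=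
          sort_insert_max has (fun b hb => T.le_max' b (mem_of_mem_erase (hs hb)))
        have h2 : T \ insert a s = T' \ s := by
          ext b
          simp only [mem_sdiff, mem_insert, mem_erase, hT', not_or]
          constructor
          · rintro ⟨hbT, hba, hbs⟩; exact ⟨⟨hba, hbT⟩, hbs⟩
          · rintro ⟨⟨hba, hbT⟩, hbs⟩; exact ⟨hbT, hba, hbs⟩
        rw [h1, List.map_append, List.map_singleton, DLL_append, h2]
      have key2 : ∀ s ∈ T'.powerset,
          DLL ((s.sort (· ≤ ·)).map c) u x
            * DLL (((T' \ s).sort (· ≤ ·)).map c) (Dd (c a) w) x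
          = DLL ((s.sort (· ≤ ·)).map c) u x
            * DLL (((T \ s).sort (· ≤ ·)).map c) w x := by
        intro s hs
        rw [mem_powerset] at hs
        have has : a ∉ s := fun h => hanT' (hs h)
        have hasd : a ∉ T' \ s := fun h => hanT' (mem_sdiff.1 h).1
        have h2 : T \ s = insert a (T' \ s) := by
          ext b
          simp only [mem_sdiff, mem_insert, mem_erase, hT']
          constructor
          · rintro ⟨hbT, hbs⟩
            by_cases hba : b = a
            · exact Or.inl hba
            · exact Or.inr ⟨⟨hba, hbT⟩, hbs⟩
          · rintro (rfl | ⟨⟨hba, hbT⟩, hbs⟩)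
            · exact ⟨haT, has⟩
            · exact ⟨hbT, hbs⟩
        have h1 : (insert a (T' \ s)).sort (· ≤ ·) = (T' \ s).sort (· ≤ ·) ++ [a] :=
          sort_insert_max hasd
            (fun b hb => T.le_max' b (mem_of_mem_erase (mem_sdiff.1 hb).1))
        rw [h2, h1, List.map_append, List.map_singleton, DLL_append]
      calc DLL ((T.sort (· ≤ ·)).map c) (fun x => u x * w x) x
          = (∑ s ∈ T'.powerset, DLL ((s.sort (· ≤ ·)).map c) (Dd (c a) u) x
                * DLL (((T' \ s).sort (· ≤ ·)).map c) w x)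
            + ∑ s ∈ T'.powerset, DLL ((s.sort (· ≤ ·)).map c) u x
                * DLL (((T' \ s).sort (· ≤ ·)).map c) (Dd (c a) w) x := by
            rw [step1, step3, ih1, ih2]
        _ = (∑ s ∈ T'.powerset, DLL (((insert a s).sort (· ≤ ·)).map c) u x
                * DLL (((T \ insert a s).sort (· ≤ ·)).map c) w x)
            + ∑ s ∈ T'.powerset, DLL ((s.sort (· ≤ ·)).map c) u x
                * DLL (((T \ s).sort (· ≤ ·)).map c) w x := by
            rw [Finset.sum_congr rfl key1, Finset.sum_congr rfl key2]
        _ = ∑ s ∈ T.powerset, DLL ((s.sort (· ≤ ·)).map c) u x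
                * DLL (((T \ s).sort (· ≤ ·)).map c) w x := by
            rw [← hins, Finset.sum_powerset_insert hanT']
            exact add_comm _ _

end DAux

/-- Differentiating `|∇f|² ≡ 1` a total of `k` times at a point where `∇f = eₙ`:
the `(k+1)`-st derivative `∂/∂yₙ ∂^k f/∂y_I` equals `−(1/2)` times the sum of products of
lower-order derivatives coming from the Leibniz rule (terms `∅ ≠ J ⊊ I`). -/
theorem stmt3 (n k : ℕ) (hn : 0 < n) (hk : 1 ≤ k)
    (U : Set (EuclideanSpace ℝ (Fin n))) (hU : IsOpen U)
    (f : EuclideanSpace ℝ (Fin n) → ℝ)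
    (hf : ContDiffOn ℝ (k + 1) f U)
    (hgrad : ∀ x ∈ U, ∑ j : Fin n, (fderiv ℝ f x (EuclideanSpace.single j 1)) ^ 2 = 1)
    (p : EuclideanSpace ℝ (Fin n)) (hp : p ∈ U)
    (hgp : ∀ j : Fin n,
      fderiv ℝ f p (EuclideanSpace.single j 1) = if j = (⟨n - 1, by omega⟩ : Fin n) then 1 else 0)
    (I : Fin k → Fin n) :
    iteratedFDeriv ℝ (k + 1) f p
        (Fin.cons (EuclideanSpace.single (⟨n - 1, by omega⟩ : Fin n) 1)
          fun i => EuclideanSpace.single (I i) 1) =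
      -(1 / 2) * ∑ j : Fin n, ∑ s : Finset (Fin k),
        if s.Nonempty ∧ s ≠ Finset.univ then
          (iteratedFDeriv ℝ (s.card + 1) f p
              (Fin.cons (EuclideanSpace.single j 1)
                fun i => EuclideanSpace.single (I ((s.orderIsoOfFin rfl i).val)) 1)) *
          (iteratedFDeriv ℝ (sᶜ.card + 1) f p
              (Fin.cons (EuclideanSpace.single j 1)
                fun i => EuclideanSpace.single (I ((sᶜ.orderIsoOfFin rfl i).val)) 1))
        else 0 := by
  haveI : Nonempty (Fin k) := ⟨⟨0, by omega⟩⟩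
  set N : Fin n := (⟨n - 1, by omega⟩ : Fin n) with hN
  set e : Fin n → EuclideanSpace ℝ (Fin n) := fun j => EuclideanSpace.single j 1 with he
  have hf' : ContDiffOn ℝ ((k + 1 : ℕ) : WithTop ℕ∞) f U := by exact_mod_cast hf
  set Ls : Finset (Fin k) → List (EuclideanSpace ℝ (Fin n)) :=
    fun s => (s.sort (· ≤ ·)).map (fun i => e (I i)) with hLs
  have hLslen : ∀ s : Finset (Fin k), (Ls s).length = s.card := by
    intro s; simp [hLs]
  have hcard_le : ∀ s : Finset (Fin k), s.card ≤ k := by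
    intro s
    simpa using Finset.card_le_univ s
  have hcastle : ∀ m m' : ℕ, m ≤ m' → ((m : ℕ) : WithTop ℕ∞) ≤ ((m' : ℕ) : WithTop ℕ∞) := by
    intro m m' h; exact_mod_cast h
  set uj : Fin n → EuclideanSpace ℝ (Fin n) → ℝ := fun j => Dd (e j) f with huj
  have hujsm : ∀ j, ContDiffOn ℝ (k : ℕ) (uj j) U := by
    intro j
    exact Dd_contDiffOn hU hf' (e j)
  have hcuniv : (Finset.univ : Finset (Fin k)).card = k := Finset.card_fin k
  -- the half-term computation
  have key : ∀ (j : Fin n) (s : Finset (Fin k)),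
      iteratedFDeriv ℝ (s.card + 1) f p
          (Fin.cons (EuclideanSpace.single j 1)
            fun i => EuclideanSpace.single (I ((s.orderIsoOfFin rfl i).val)) 1)
        = DLL (Ls s) (uj j) p := by
    intro j s
    have hsm : ContDiffOn ℝ ((s.card + 1 : ℕ) : WithTop ℕ∞) f U :=
      hf'.of_le (hcastle _ _ (by have := hcard_le s; omega))
    have h1 := iteratedFDeriv_eq_DLL hU (s.card + 1) f hsm hp
      (Fin.cons (e j) (fun i => e (I ((s.orderIsoOfFin rfl i).val))))
    have h2 : List.ofFn (Fin.cons (e j) (fun i => e (I ((s.orderIsoOfFin rfl i).val))))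
        = e j :: Ls s := by
      rw [ofFn_cons]
      congr 1
      exact ofFn_orderIso s (fun i => e (I i))
    have hsm2 : ContDiffOn ℝ (((Ls s).length + 1 : ℕ) : WithTop ℕ∞) f U := by
      rw [hLslen]
      exact hf'.of_le (hcastle _ _ (by have := hcard_le s; omega))
    calc iteratedFDeriv ℝ (s.card + 1) f p
          (Fin.cons (EuclideanSpace.single j 1)
            fun i => EuclideanSpace.single (I ((s.orderIsoOfFin rfl i).val)) 1)
        = DLL (List.ofFn (Fin.cons (e j) (fun i => e (I ((s.orderIsoOfFin rfl i).val))))) f p :=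
          h1
      _ = DLL (e j :: Ls s) f p := by rw [h2]
      _ = Dd (e j) (DLL (Ls s) f) p := rfl
      _ = DLL (Ls s) (uj j) p := ((DLL_Dd_comm hU (Ls s) hsm2 (e j)) hp).symm
  -- the left-hand side
  have hLuniv : List.ofFn (fun i : Fin k => e (I i)) = Ls Finset.univ := by
    show List.ofFn (fun i : Fin k => e (I i))
        = ((Finset.univ : Finset (Fin k)).sort (· ≤ ·)).map (fun i => e (I i))
    rw [sort_univ_eq, List.ofFn_eq_map]
  have hsmk1 : ContDiffOn ℝ (((Ls Finset.univ).length + 1 : ℕ) : WithTop ℕ∞) f U := by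
    rw [hLslen, hcuniv]
    exact hf'
  have hXlhs : iteratedFDeriv ℝ (k + 1) f p
        (Fin.cons (EuclideanSpace.single N 1) fun i => EuclideanSpace.single (I i) 1)
      = DLL (Ls Finset.univ) (uj N) p := by
    have h1 := iteratedFDeriv_eq_DLL hU (k + 1) f hf' hp
      (Fin.cons (e N) (fun i => e (I i)))
    calc iteratedFDeriv ℝ (k + 1) f p
          (Fin.cons (EuclideanSpace.single N 1) fun i => EuclideanSpace.single (I i) 1)
        = DLL (List.ofFn (Fin.cons (e N) (fun i => e (I i)))) f p := h1
      _ = DLL (e N :: Ls Finset.univ) f p := by rw [ofFn_cons, hLuniv]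
      _ = Dd (e N) (DLL (Ls Finset.univ) f) p := rfl
      _ = DLL (Ls Finset.univ) (uj N) p :=
          ((DLL_Dd_comm hU (Ls Finset.univ) hsmk1 (e N)) hp).symm
  set X : ℝ := DLL (Ls Finset.univ) (uj N) p with hX
  set G : Fin n → Finset (Fin k) → ℝ :=
    fun j s => DLL (Ls s) (uj j) p * DLL (Ls sᶜ) (uj j) p with hG
  -- the sum of squares is constant
  have hgone : Set.EqOn (fun x => ∑ j : Fin n, uj j x * uj j x) (fun _ => (1 : ℝ)) U := by
    intro x hx
    show ∑ j : Fin n, fderiv ℝ f x (EuclideanSpace.single j 1)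
        * fderiv ℝ f x (EuclideanSpace.single j 1) = 1
    have h := hgrad x hx
    simpa [pow_two] using h
  have hLuniv_ne : Ls Finset.univ ≠ [] := by
    have h1 : (Ls Finset.univ).length = k := by rw [hLslen, hcuniv]
    intro h
    rw [h] at h1
    simp at h1
    omega
  have hzero : DLL (Ls Finset.univ) (fun x => ∑ j : Fin n, uj j x * uj j x) p = 0 := by
    rw [DLL_congr hU (Ls Finset.univ) hgone hp, DLL_one (Ls Finset.univ) hLuniv_ne]
  have hexp : DLL (Ls Finset.univ) (fun x => ∑ j : Fin n, uj j x * uj j x) p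
      = ∑ j : Fin n, ∑ s : Finset (Fin k), G j s := by
    have h1 := DLL_sum hU Finset.univ (Ls Finset.univ) (fun j x => uj j x * uj j x)
      (fun j _ => by
        rw [hLslen, hcuniv]
        exact (hujsm j).mul (hujsm j)) hp
    calc DLL (Ls Finset.univ) (fun x => ∑ j : Fin n, uj j x * uj j x) p
        = ∑ j : Fin n, DLL (Ls Finset.univ) (fun x => uj j x * uj j x) p := h1
      _ = ∑ j : Fin n, ∑ s : Finset (Fin k), G j s := by
          refine Finset.sum_congr rfl (fun j _ => ?_)
          have h2 := DLL_leibniz hU (fun i => e (I i)) Finset.univ (uj j) (uj j)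
            (by rw [hcuniv]; exact hujsm j) (by rw [hcuniv]; exact hujsm j) hp
          calc DLL (Ls Finset.univ) (fun x => uj j x * uj j x) p
              = ∑ s ∈ (Finset.univ : Finset (Fin k)).powerset,
                  DLL ((s.sort (· ≤ ·)).map (fun i => e (I i))) (uj j) p
                  * DLL ((((Finset.univ : Finset (Fin k)) \ s).sort (· ≤ ·)).map
                      (fun i => e (I i))) (uj j) p := by
                  simp only [] at h2
                  exact h2
            _ = ∑ s : Finset (Fin k), G j s := by
                rw [Finset.powerset_univ]
                refine Finset.sum_congr rfl (fun s _ => ?_)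
                rw [← Finset.compl_eq_univ_sdiff]
  -- splitting off the empty and full sets
  have hne : (∅ : Finset (Fin k)) ≠ Finset.univ :=
    Ne.symm Finset.univ_nonempty.ne_empty
  have hsplit : ∀ j : Fin n, (∑ s : Finset (Fin k), G j s)
      = G j ∅ + G j Finset.univ
        + ∑ s : Finset (Fin k), (if s.Nonempty ∧ s ≠ Finset.univ then G j s else 0) := by
    intro j
    have h1 := Finset.sum_filter_add_sum_filter_not (Finset.univ : Finset (Finset (Fin k)))
      (fun s => s.Nonempty ∧ s ≠ Finset.univ) (G j)
    have h2 : Finset.univ.filter (fun s : Finset (Fin k) => ¬(s.Nonempty ∧ s ≠ Finset.univ))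
        = {∅, Finset.univ} := by
      ext s
      simp only [Finset.mem_filter, Finset.mem_univ, true_and, Finset.mem_insert,
        Finset.mem_singleton, not_and_or, not_not, Finset.not_nonempty_iff_eq_empty]
    have h3 : ∑ s ∈ Finset.univ.filter
          (fun s : Finset (Fin k) => ¬(s.Nonempty ∧ s ≠ Finset.univ)), G j s
        = G j ∅ + G j Finset.univ := by
      rw [h2, Finset.sum_pair hne]
    have h4 : ∑ s ∈ Finset.univ.filter
          (fun s : Finset (Fin k) => s.Nonempty ∧ s ≠ Finset.univ), G j s
        = ∑ s : Finset (Fin k), (if s.Nonempty ∧ s ≠ Finset.univ then G j s else 0) :=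
      Finset.sum_filter _ _
    rw [← h1, h3, h4]
    ring
  -- the boundary terms
  have hujp : ∀ j, uj j p = if j = N then (1:ℝ) else 0 := by
    intro j
    show fderiv ℝ f p (EuclideanSpace.single j 1) = _
    exact hgp j
  have hLe : Ls ∅ = [] := by simp [hLs]
  have hGempty : ∑ j : Fin n, G j ∅ = X := by
    have h1 : ∀ j, G j ∅ = (if j = N then (1:ℝ) else 0) * DLL (Ls Finset.univ) (uj j) p := by
      intro j
      show DLL (Ls ∅) (uj j) p * DLL (Ls (∅ᶜ : Finset (Fin k))) (uj j) p = _
      rw [hLe, Finset.compl_empty]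
      show uj j p * DLL (Ls Finset.univ) (uj j) p = _
      rw [hujp j]
    rw [Finset.sum_congr rfl (fun j _ => h1 j)]
    simp only [ite_mul, one_mul, zero_mul]
    rw [Fintype.sum_ite_eq' N (fun j => DLL (Ls Finset.univ) (uj j) p)]
  have hGuniv : ∑ j : Fin n, G j Finset.univ = X := by
    have h1 : ∀ j, G j Finset.univ
        = DLL (Ls Finset.univ) (uj j) p * (if j = N then (1:ℝ) else 0) := by
      intro j
      show DLL (Ls Finset.univ) (uj j) p
          * DLL (Ls ((Finset.univ : Finset (Fin k))ᶜ)) (uj j) p = _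
      rw [Finset.compl_univ, hLe]
      show DLL (Ls Finset.univ) (uj j) p * uj j p = _
      rw [hujp j]
    rw [Finset.sum_congr rfl (fun j _ => h1 j)]
    simp only [mul_ite, mul_one, mul_zero]
    rw [Fintype.sum_ite_eq' N (fun j => DLL (Ls Finset.univ) (uj j) p)]
  -- put everything together
  have hmain : 0 = X + X + ∑ j : Fin n, ∑ s : Finset (Fin k),
      (if s.Nonempty ∧ s ≠ Finset.univ then G j s else 0) := by
    have h0 : (∑ j : Fin n, ∑ s : Finset (Fin k), G j s) = 0 := hexp.symm.trans hzero
    have h1 : (∑ j : Fin n, ∑ s : Finset (Fin k), G j s)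
        = (∑ j : Fin n, G j ∅) + (∑ j : Fin n, G j Finset.univ)
          + ∑ j : Fin n, ∑ s : Finset (Fin k),
              (if s.Nonempty ∧ s ≠ Finset.univ then G j s else 0) := by
      rw [Finset.sum_congr rfl (fun j _ => hsplit j), Finset.sum_add_distrib,
        Finset.sum_add_distrib]
    rw [hGempty, hGuniv] at h1
    linarith [h0, h1]
  have hgoal : ∀ (j : Fin n) (s : Finset (Fin k)),
      (if s.Nonempty ∧ s ≠ Finset.univ then
          (iteratedFDeriv ℝ (s.card + 1) f p
              (Fin.cons (EuclideanSpace.single j 1)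
                fun i => EuclideanSpace.single (I ((s.orderIsoOfFin rfl i).val)) 1)) *
          (iteratedFDeriv ℝ (sᶜ.card + 1) f p
              (Fin.cons (EuclideanSpace.single j 1)
                fun i => EuclideanSpace.single (I ((sᶜ.orderIsoOfFin rfl i).val)) 1))
        else 0)
      = (if s.Nonempty ∧ s ≠ Finset.univ then G j s else 0) := by
    intro j s
    by_cases h : s.Nonempty ∧ s ≠ Finset.univ
    · rw [if_pos h, if_pos h, key j s, key j sᶜ]
    · rw [if_neg h, if_neg h]
  calc iteratedFDeriv ℝ (k + 1) f p
        (Fin.cons (EuclideanSpace.single (⟨n - 1, by omega⟩ : Fin n) 1)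
          fun i => EuclideanSpace.single (I i) 1)
      = X := hXlhs
    _ = -(1 / 2) * ∑ j : Fin n, ∑ s : Finset (Fin k),
        (if s.Nonempty ∧ s ≠ Finset.univ then
          (iteratedFDeriv ℝ (s.card + 1) f p
              (Fin.cons (EuclideanSpace.single j 1)
                fun i => EuclideanSpace.single (I ((s.orderIsoOfFin rfl i).val)) 1)) *
          (iteratedFDeriv ℝ (sᶜ.card + 1) f p
              (Fin.cons (EuclideanSpace.single j 1)
                fun i => EuclideanSpace.single (I ((sᶜ.orderIsoOfFin rfl i).val)) 1))
        else 0) := by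
        rw [Finset.sum_congr rfl (fun j _ =>
          Finset.sum_congr rfl (fun s _ => hgoal j s))]
        linarith [hmain]
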